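/- Fix x ∈ ℝⁿ with h(x) < +∞, let η₂ ∈ (0, 1) and κ_m > 0, and suppose |(f(x+s) + h(x+s)) − (φ(s; x) + ψ(s; x))| ≤ κ_m ‖s‖₂² for all s ∈ ℝⁿ. Let s ∈ ℝⁿ with s ≠ 0 and ψ(s; x) < +∞ satisfy m(s; x, σ) ≤ m(0; x, σ), where σ ≥ 2κ_m/(1 − η₂). Then the model decrease D := (φ(0; x) + ψ(0; x)) − (φ(s; x) + ψ(s; x)) satisfies D ≥ (σ/2)‖s‖₂² > 0, and the ratio ρ := ((f(x) + h(x)) − (f(x+s) + h(x+s)))/D satisfies ρ ≥ η₂. -/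

import Mathlib

/-- Key estimate of Theorem 4.1: if σ ≥ 2κₘ/(1-η₂) and the step decreases the model,
then the model decrease is at least (σ/2)‖s‖² > 0 and the ratio ρ is at least η₂. -/
theorem very_successful_iteration {n m : ℕ}
    (F : EuclideanSpace ℝ (Fin n) → EuclideanSpace ℝ (Fin m))
    (J : EuclideanSpace ℝ (Fin n) →L[ℝ] EuclideanSpace ℝ (Fin m))
    (x : EuclideanSpace ℝ (Fin n))
    (hF : ContDiff ℝ 1 F) (hJ : HasFDerivAt F J x)
    (f : EuclideanSpace ℝ (Fin n) → ℝ)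
    (hf : f = fun y => (1 / 2) * ‖F y‖ ^ 2)
    (h : EuclideanSpace ℝ (Fin n) → EReal)
    (hproper : ∃ u, h u ≠ ⊤) (hnobot : ∀ u, h u ≠ ⊥) (hlsc : LowerSemicontinuous h)
    (ψ : EuclideanSpace ℝ (Fin n) → EReal)
    (hψproper : ∃ t, ψ t ≠ ⊤) (hψnobot : ∀ t, ψ t ≠ ⊥) (hψlsc : LowerSemicontinuous ψ)
    (hψ0 : ψ 0 = h x)
    (hx : h x < ⊤)
    (η₂ : ℝ) (hη₂ : η₂ ∈ Set.Ioo (0 : ℝ) 1)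
    (κm : ℝ) (hκm : 0 < κm)
    (φ : EuclideanSpace ℝ (Fin n) → ℝ)
    (hφ : φ = fun t => (1 / 2) * ‖J t + F x‖ ^ 2)
    -- model adequacy: |(f(x+t)+h(x+t)) - (φ(t)+ψ(t))| ≤ κₘ‖t‖² for all t
    (hadeq : ∀ t : EuclideanSpace ℝ (Fin n),
      (f (x + t) : EReal) + h (x + t) ≤ (φ t : EReal) + ψ t + ((κm * ‖t‖ ^ 2 : ℝ) : EReal) ∧
      (φ t : EReal) + ψ t ≤ (f (x + t) : EReal) + h (x + t) + ((κm * ‖t‖ ^ 2 : ℝ) : EReal))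
    (σ : ℝ) (hσ : 2 * κm / (1 - η₂) ≤ σ)
    (s : EuclideanSpace ℝ (Fin n)) (hs0 : s ≠ 0) (hψs : ψ s < ⊤)
    (hdec : (φ s : EReal) + ((σ / 2) * ‖s‖ ^ 2 : ℝ) + ψ s
        ≤ (φ 0 : EReal) + ψ 0) :
    (((σ / 2) * ‖s‖ ^ 2 : ℝ) : EReal) ≤ (φ 0 : EReal) + ψ 0 - ((φ s : EReal) + ψ s) ∧
    (0 : EReal) < (φ 0 : EReal) + ψ 0 - ((φ s : EReal) + ψ s) ∧
    (η₂ : EReal) ≤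
      ((f x : EReal) + h x - ((f (x + s) : EReal) + h (x + s))) /
        ((φ 0 : EReal) + ψ 0 - ((φ s : EReal) + ψ s)) := by
  obtain ⟨hη₂0, hη₂1⟩ := hη₂
  have hs2 : (0:ℝ) < ‖s‖ ^ 2 := pow_pos (norm_pos_iff.mpr hs0) 2
  have hσ0 : 0 < σ := lt_of_lt_of_le (div_pos (by linarith) (by linarith)) hσ
  -- real values
  set A : ℝ := (h x).toReal with hA
  have hxr : h x = (A : EReal) := (EReal.coe_toReal hx.ne (hnobot x)).symm
  set B : ℝ := (ψ s).toReal with hB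
  have hsr : ψ s = (B : EReal) := (EReal.coe_toReal hψs.ne (hψnobot s)).symm
  have hxsne : h (x + s) ≠ ⊤ := by
    intro htop
    have := (hadeq s).1
    rw [htop] at this
    simp only [EReal.add_top_of_ne_bot (EReal.coe_ne_bot _)] at this
    rw [hsr] at this
    norm_cast at this
  set H : ℝ := (h (x + s)).toReal with hH
  have hxsr : h (x + s) = (H : EReal) := (EReal.coe_toReal hxsne (hnobot (x + s))).symm
  -- φ 0 = f x
  have hφ0 : φ 0 = f x := by
    simp [hφ, hf, map_zero]
  -- real version of hdec
  have hdecR : φ s + (σ / 2) * ‖s‖ ^ 2 + B ≤ φ 0 + A := by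
    rw [hsr, hψ0, hxr] at hdec
    exact_mod_cast hdec
  set D : ℝ := φ 0 + A - (φ s + B) with hD
  have hD1 : (σ / 2) * ‖s‖ ^ 2 ≤ D := by rw [hD]; linarith
  have hD0 : 0 < D := lt_of_lt_of_le (by positivity) hD1
  -- real versions of adequacy at s
  have had1 : f (x + s) + H ≤ φ s + B + κm * ‖s‖ ^ 2 := by
    have := (hadeq s).1
    rw [hxsr, hsr] at this
    exact_mod_cast this
  -- rewrite goal in real terms
  rw [hψ0, hxr, hsr, hxsr]
  have hDe : (φ 0 : EReal) + (A:EReal) - ((φ s : EReal) + (B:EReal)) = ((D:ℝ) : EReal) := by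
    rw [hD]; norm_cast
  rw [hDe]
  refine ⟨by exact_mod_cast hD1, by exact_mod_cast hD0, ?_⟩
  have hNe : (f x : EReal) + (A:EReal) - ((f (x + s) : EReal) + (H:EReal))
      = ((f x + A - (f (x + s) + H) : ℝ) : EReal) := by norm_cast
  rw [hNe, ← EReal.coe_div, EReal.coe_le_coe_iff]
  rw [le_div_iff₀ hD0]
  -- key: κm‖s‖² ≤ (1-η₂) D
  have key : κm * ‖s‖ ^ 2 ≤ (1 - η₂) * D := by
    have h1 : 2 * κm ≤ (1 - η₂) * σ := by
      rw [div_le_iff₀ (by linarith)] at hσ; linarith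
    have h2 : (1 - η₂) * ((σ / 2) * ‖s‖ ^ 2) ≤ (1 - η₂) * D :=
      mul_le_mul_of_nonneg_left hD1 (by linarith)
    nlinarith
  nlinarith [hφ0, had1]
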